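/- For integers k ≥ 2 and r ≥ 3 with gcd(r, k) = 1, the free product Z_k * Z_r contains a non-abelian free subgroup; in fact its commutator subgroup is a free group of rank (k−1)(r−1). -/

import Mathlib

namespace Stmt6Aux

open Monoid
open scoped commutatorElement

variable (k r : ℕ)

local notation "M" => Multiplicative (ZMod k)
local notation "N" => Multiplicative (ZMod r)
local notation "G" => Monoid.Coprod (Multiplicative (ZMod k)) (Multiplicative (ZMod r))

/-- `a i = aᵢ`, the image of `i : ZMod k`. -/
def a (i : ZMod k) : G := Coprod.inl (Multiplicative.ofAdd i)
def b (j : ZMod r) : G := Coprod.inr (Multiplicative.ofAdd j)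

lemma a_add (i i' : ZMod k) : a k r (i + i') = a k r i * a k r i' := by
  simp [a, ofAdd_add]
lemma a_zero : a k r 0 = 1 := by simp [a]
lemma a_inv (i : ZMod k) : (a k r i)⁻¹ = a k r (-i) := by simp [a, ofAdd_neg]
lemma b_add (j j' : ZMod r) : b k r (j + j') = b k r j * b k r j' := by
  simp [b, ofAdd_add]
lemma b_zero : b k r 0 = 1 := by simp [b]
lemma b_inv (j : ZMod r) : (b k r j)⁻¹ = b k r (-j) := by simp [b, ofAdd_neg]

/-- index set for the free generators -/
abbrev S := {i : ZMod k // i ≠ 0} × {j : ZMod r // j ≠ 0}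

abbrev F := FreeGroup (S k r)

/-- formal generator, extended by `1` for zero indices -/
def C (i : ZMod k) (j : ZMod r) : F k r :=
  if hi : i = 0 then 1 else if hj : j = 0 then 1 else FreeGroup.of (⟨i, hi⟩, ⟨j, hj⟩)

@[simp] lemma C_zero_left (j : ZMod r) : C k r 0 j = 1 := by simp [C]
@[simp] lemma C_zero_right (i : ZMod k) : C k r i 0 = 1 := by simp [C]
lemma C_ne (i : ZMod k) (j : ZMod r) (hi : i ≠ 0) (hj : j ≠ 0) :
    C k r i j = FreeGroup.of (⟨i, hi⟩, ⟨j, hj⟩) := by simp [C, hi, hj]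

/-- the commutator `[aⁱ, bʲ]` -/
def com (i : ZMod k) (j : ZMod r) : G :=
  a k r i * b k r j * (a k r i)⁻¹ * (b k r j)⁻¹

/-- the set on which `G` acts -/
abbrev X := (ZMod k × ZMod r) × F k r

def permA (m : ZMod k) : Equiv.Perm (X k r) where
  toFun x := ((x.1.1 - m, x.1.2), x.2 * C k r x.1.1 x.1.2 * (C k r (x.1.1 - m) x.1.2)⁻¹)
  invFun x := ((x.1.1 + m, x.1.2), x.2 * C k r x.1.1 x.1.2 * (C k r (x.1.1 + m) x.1.2)⁻¹)
  left_inv := by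
    rintro ⟨⟨i, j⟩, w⟩
    simp [sub_add_cancel, mul_assoc]
  right_inv := by
    rintro ⟨⟨i, j⟩, w⟩
    simp [add_sub_cancel_right, mul_assoc]

def permB (n : ZMod r) : Equiv.Perm (X k r) where
  toFun x := ((x.1.1, x.1.2 - n), x.2)
  invFun x := ((x.1.1, x.1.2 + n), x.2)
  left_inv := by rintro ⟨⟨i, j⟩, w⟩; simp [sub_add_cancel]
  right_inv := by rintro ⟨⟨i, j⟩, w⟩; simp [add_sub_cancel_right]

def rhoA : Multiplicative (ZMod k) →* Equiv.Perm (X k r) :=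
  MonoidHom.mk' (fun m => permA k r m.toAdd) (by
    intro m m'
    apply Equiv.ext
    rintro ⟨⟨i, j⟩, w⟩
    simp [permA, Equiv.Perm.mul_apply, sub_sub, add_comm, mul_assoc])

def rhoB : Multiplicative (ZMod r) →* Equiv.Perm (X k r) :=
  MonoidHom.mk' (fun n => permB k r n.toAdd) (by
    intro n n'
    apply Equiv.ext
    rintro ⟨⟨i, j⟩, w⟩
    simp [permB, Equiv.Perm.mul_apply, sub_sub, add_comm])

def rho : Coprod (Multiplicative (ZMod k)) (Multiplicative (ZMod r)) →* Equiv.Perm (X k r) :=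
  Coprod.lift (rhoA k r) (rhoB k r)

@[simp] lemma rho_a (i : ZMod k) (x : X k r) :
    rho k r (a k r i) x
      = ((x.1.1 - i, x.1.2), x.2 * C k r x.1.1 x.1.2 * (C k r (x.1.1 - i) x.1.2)⁻¹) := by
  simp [rho, a, Coprod.lift_apply_inl, rhoA, permA]

@[simp] lemma rho_b (j : ZMod r) (x : X k r) :
    rho k r (b k r j) x = ((x.1.1, x.1.2 - j), x.2) := by
  simp [rho, b, Coprod.lift_apply_inr, rhoB, permB]


def alphaH : Monoid.Coprod (Multiplicative (ZMod k)) (Multiplicative (ZMod r)) →*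
    Multiplicative (ZMod k) :=
  Coprod.lift (MonoidHom.id _) 1

def betaH : Monoid.Coprod (Multiplicative (ZMod k)) (Multiplicative (ZMod r)) →*
    Multiplicative (ZMod r) :=
  Coprod.lift 1 (MonoidHom.id _)

@[simp] lemma alphaH_a (i : ZMod k) : alphaH k r (a k r i) = Multiplicative.ofAdd i := by
  simp [alphaH, a, Coprod.lift_apply_inl]
@[simp] lemma alphaH_b (j : ZMod r) : alphaH k r (b k r j) = 1 := by
  simp [alphaH, b, Coprod.lift_apply_inr]
@[simp] lemma betaH_a (i : ZMod k) : betaH k r (a k r i) = 1 := by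
  simp [betaH, a, Coprod.lift_apply_inl]
@[simp] lemma betaH_b (j : ZMod r) : betaH k r (b k r j) = Multiplicative.ofAdd j := by
  simp [betaH, b, Coprod.lift_apply_inr]

lemma rho_fst (g : Monoid.Coprod (Multiplicative (ZMod k)) (Multiplicative (ZMod r)))
    (x : X k r) :
    (rho k r g x).1 = (x.1.1 - (alphaH k r g).toAdd, x.1.2 - (betaH k r g).toAdd) := by
  induction g using Coprod.induction_on generalizing x with
  | inl m =>
      rcases x with ⟨⟨i, j⟩, w⟩
      have : Coprod.inl m = a k r m.toAdd := rfl
      rw [this]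
      simp
  | inr n =>
      rcases x with ⟨⟨i, j⟩, w⟩
      have : Coprod.inr n = b k r n.toAdd := rfl
      rw [this]
      simp
  | mul g h ihg ihh =>
      rw [map_mul, Equiv.Perm.mul_apply, ihg, ihh]
      simp [sub_sub, add_comm]

lemma rho_snd (g : Monoid.Coprod (Multiplicative (ZMod k)) (Multiplicative (ZMod r)))
    (p : ZMod k × ZMod r) (w : F k r) :
    rho k r g (p, w) = ((rho k r g (p, 1)).1, w * (rho k r g (p, 1)).2) := by
  induction g using Coprod.induction_on generalizing p w with
  | inl m =>
      rcases p with ⟨i, j⟩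
      have : Coprod.inl m = a k r m.toAdd := rfl
      rw [this]
      simp [mul_assoc]
  | inr n =>
      rcases p with ⟨i, j⟩
      have : Coprod.inr n = b k r n.toAdd := rfl
      rw [this]
      simp
  | mul g h ihg ihh =>
      simp only [map_mul, Equiv.Perm.mul_apply]
      rw [ihh p w, ihh p 1, one_mul, ihg _ (w * _), ihg _ (rho k r h (p, 1)).2]
      simp [mul_assoc]


/-- the cocycle evaluated at the base point -/
def piF (g : Monoid.Coprod (Multiplicative (ZMod k)) (Multiplicative (ZMod r))) : F k r :=
  (rho k r g ((0, 0), 1)).2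

@[simp] lemma piF_one : piF k r 1 = 1 := by simp [piF]

lemma rho_base (h : Monoid.Coprod (Multiplicative (ZMod k)) (Multiplicative (ZMod r)))
    (hα : alphaH k r h = 1) (hβ : betaH k r h = 1) :
    rho k r h ((0, 0), 1) = ((0, 0), piF k r h) := by
  have h1 := rho_fst k r h ((0, 0), 1)
  rcases he : rho k r h ((0, 0), 1) with ⟨q, s⟩
  rw [he] at h1
  simp [hα, hβ] at h1
  have h2 : piF k r h = s := by rw [piF, he]
  rw [h2, h1]

lemma piF_mul (g h : Monoid.Coprod (Multiplicative (ZMod k)) (Multiplicative (ZMod r)))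
    (hα : alphaH k r h = 1) (hβ : betaH k r h = 1) :
    piF k r (g * h) = piF k r h * piF k r g := by
  unfold piF
  rw [map_mul, Equiv.Perm.mul_apply, rho_base k r h hα hβ,
    rho_snd k r g (0, 0) (piF k r h)]

lemma piF_com (i : ZMod k) (j : ZMod r) : piF k r (com k r i j) = (C k r i j)⁻¹ := by
  unfold piF com
  rw [a_inv, b_inv]
  simp only [map_mul, Equiv.Perm.mul_apply]
  rw [rho_b, rho_a, rho_b, rho_a]
  simp

lemma alphaH_com (i : ZMod k) (j : ZMod r) : alphaH k r (com k r i j) = 1 := by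
  simp [com, map_mul, map_inv]

lemma betaH_com (i : ZMod k) (j : ZMod r) : betaH k r (com k r i j) = 1 := by
  simp [com, map_mul, map_inv]

/-- the generating map -/
def f (s : S k r) : Monoid.Coprod (Multiplicative (ZMod k)) (Multiplicative (ZMod r)) :=
  com k r s.1.1 s.2.1

def phi : F k r →* Monoid.Coprod (Multiplicative (ZMod k)) (Multiplicative (ZMod r)) :=
  FreeGroup.lift (f k r)

lemma alphaH_phi (w : F k r) : alphaH k r (phi k r w) = 1 := by
  have : (alphaH k r).comp (phi k r) = 1 := by
    apply FreeGroup.ext_hom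
    intro s
    simp [phi, f, alphaH_com]
  calc alphaH k r (phi k r w) = ((alphaH k r).comp (phi k r)) w := rfl
    _ = 1 := by rw [this]; rfl

lemma betaH_phi (w : F k r) : betaH k r (phi k r w) = 1 := by
  have : (betaH k r).comp (phi k r) = 1 := by
    apply FreeGroup.ext_hom
    intro s
    simp [phi, f, betaH_com]
  calc betaH k r (phi k r w) = ((betaH k r).comp (phi k r)) w := rfl
    _ = 1 := by rw [this]; rfl

def lam : F k r →* F k r :=
  MonoidHom.mk' (fun w => (piF k r (phi k r w))⁻¹) (by
    intro v w
    show (piF k r (phi k r (v * w)))⁻¹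
      = (piF k r (phi k r v))⁻¹ * (piF k r (phi k r w))⁻¹
    rw [map_mul, piF_mul k r _ _ (alphaH_phi k r w) (betaH_phi k r w), mul_inv_rev])

lemma lam_eq_id (w : F k r) : lam k r w = w := by
  have : lam k r = MonoidHom.id (F k r) := by
    apply FreeGroup.ext_hom
    intro s
    show (piF k r (phi k r (FreeGroup.of s)))⁻¹ = FreeGroup.of s
    rw [show phi k r (FreeGroup.of s) = f k r s from FreeGroup.lift_apply_of]
    rw [show f k r s = com k r s.1.1 s.2.1 from rfl, piF_com, inv_inv,
      C_ne k r _ _ s.1.2 s.2.2]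
  rw [this]; rfl

lemma phi_injective : Function.Injective (phi k r) := by
  apply (injective_iff_map_eq_one (phi k r)).2
  intro w hw
  have h := lam_eq_id k r w
  rw [show lam k r w = (piF k r (phi k r w))⁻¹ from rfl, hw] at h
  simpa using h.symm


lemma conj_a (m i : ZMod k) (j : ZMod r) :
    a k r m * com k r i j * (a k r m)⁻¹ = com k r (i + m) j * (com k r m j)⁻¹ := by
  have h1 : a k r (i + m) = a k r m * a k r i := by rw [add_comm, a_add]
  simp only [com, h1]
  group

lemma conj_b (n : ZMod r) (i : ZMod k) (j : ZMod r) :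
    b k r n * com k r i j * (b k r n)⁻¹ = (com k r i n)⁻¹ * com k r i (j + n) := by
  have h1 : b k r (j + n) = b k r n * b k r j := by rw [add_comm, b_add]
  simp only [com, h1]
  group

/-- the subgroup generated by the commutators -/
def H : Subgroup (Monoid.Coprod (Multiplicative (ZMod k)) (Multiplicative (ZMod r))) :=
  Subgroup.closure (Set.range (f k r))

lemma com_mem (i : ZMod k) (j : ZMod r) : com k r i j ∈ H k r := by
  by_cases hi : i = 0
  · have : com k r i j = 1 := by simp [com, hi, a_zero]
    rw [this]; exact one_mem _
  by_cases hj : j = 0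
  · have : com k r i j = 1 := by simp [com, hj, b_zero]
    rw [this]; exact one_mem _
  · exact Subgroup.subset_closure ⟨(⟨i, hi⟩, ⟨j, hj⟩), rfl⟩

lemma conj_mem (g x : Monoid.Coprod (Multiplicative (ZMod k)) (Multiplicative (ZMod r)))
    (hx : x ∈ H k r) : g * x * g⁻¹ ∈ H k r := by
  induction g using Coprod.induction_on generalizing x with
  | inl m =>
      have hm : Coprod.inl m = a k r m.toAdd := rfl
      rw [hm]
      refine Subgroup.closure_induction ?_ ?_ ?_ ?_ hx
      · rintro y ⟨⟨⟨i, hi⟩, ⟨j, hj⟩⟩, rfl⟩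
        have : f k r (⟨i, hi⟩, ⟨j, hj⟩) = com k r i j := rfl
        rw [this, conj_a]
        exact mul_mem (com_mem k r _ _) (inv_mem (com_mem k r _ _))
      · simpa using one_mem (H k r)
      · intro y z _ _ hy hz
        have : a k r m.toAdd * (y * z) * (a k r m.toAdd)⁻¹
            = (a k r m.toAdd * y * (a k r m.toAdd)⁻¹)
              * (a k r m.toAdd * z * (a k r m.toAdd)⁻¹) := by group
        rw [this]; exact mul_mem hy hz
      · intro y _ hy
        have : a k r m.toAdd * y⁻¹ * (a k r m.toAdd)⁻¹
            = (a k r m.toAdd * y * (a k r m.toAdd)⁻¹)⁻¹ := by group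
        rw [this]; exact inv_mem hy
  | inr n =>
      have hn : Coprod.inr n = b k r n.toAdd := rfl
      rw [hn]
      refine Subgroup.closure_induction ?_ ?_ ?_ ?_ hx
      · rintro y ⟨⟨⟨i, hi⟩, ⟨j, hj⟩⟩, rfl⟩
        have : f k r (⟨i, hi⟩, ⟨j, hj⟩) = com k r i j := rfl
        rw [this, conj_b]
        exact mul_mem (inv_mem (com_mem k r _ _)) (com_mem k r _ _)
      · simpa using one_mem (H k r)
      · intro y z _ _ hy hz
        have : b k r n.toAdd * (y * z) * (b k r n.toAdd)⁻¹
            = (b k r n.toAdd * y * (b k r n.toAdd)⁻¹)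
              * (b k r n.toAdd * z * (b k r n.toAdd)⁻¹) := by group
        rw [this]; exact mul_mem hy hz
      · intro y _ hy
        have : b k r n.toAdd * y⁻¹ * (b k r n.toAdd)⁻¹
            = (b k r n.toAdd * y * (b k r n.toAdd)⁻¹)⁻¹ := by group
        rw [this]; exact inv_mem hy
  | mul g h ihg ihh =>
      have : g * h * x * (g * h)⁻¹ = g * (h * x * h⁻¹) * g⁻¹ := by group
      rw [this]
      exact ihg _ (ihh _ hx)

instance H_normal : (H k r).Normal := ⟨fun x hx g => conj_mem k r g x hx⟩

lemma commutator_mem (g h : Monoid.Coprod (Multiplicative (ZMod k)) (Multiplicative (ZMod r))) :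
    ⁅g, h⁆ ∈ H k r := by
  let q := QuotientGroup.mk' (H k r)
  have key : ∀ g h, Commute (q g) (q h) := by
    have base : ∀ g h, (∀ x, Commute (q g) (q x)) → Commute (q g) (q h) := fun g h hg => hg h
    -- prove by double induction
    intro g h
    induction g using Coprod.induction_on generalizing h with
    | inl m =>
        induction h using Coprod.induction_on with
        | inl m' =>
            have : Commute (Coprod.inl m : Monoid.Coprod (Multiplicative (ZMod k))
                (Multiplicative (ZMod r))) (Coprod.inl m') := by
              rw [Commute, SemiconjBy, ← map_mul, ← map_mul, mul_comm]
            exact this.map q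
        | inr n =>
            rw [← commutatorElement_eq_one_iff_commute, ← map_commutatorElement]
            refine (QuotientGroup.eq_one_iff _).2 ?_
            have : ⁅(Coprod.inl m : Monoid.Coprod (Multiplicative (ZMod k))
                (Multiplicative (ZMod r))), Coprod.inr n⁆ = com k r m.toAdd n.toAdd := by
              rfl
            rw [this]
            exact com_mem k r _ _
        | mul x y ihx ihy => exact (Commute.mul_right ihx ihy)
    | inr n =>
        induction h using Coprod.induction_on with
        | inl m' =>
            rw [← commutatorElement_eq_one_iff_commute, ← map_commutatorElement]
            refine (QuotientGroup.eq_one_iff _).2 ?_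
            have h1 : ⁅(Coprod.inr n : Monoid.Coprod (Multiplicative (ZMod k))
                (Multiplicative (ZMod r))), Coprod.inl m'⁆
                = ⁅(Coprod.inl m' : Monoid.Coprod (Multiplicative (ZMod k))
                    (Multiplicative (ZMod r))), Coprod.inr n⁆⁻¹ := by
              rw [commutatorElement_inv]
            rw [h1]
            apply inv_mem
            have : ⁅(Coprod.inl m' : Monoid.Coprod (Multiplicative (ZMod k))
                (Multiplicative (ZMod r))), Coprod.inr n⁆ = com k r m'.toAdd n.toAdd := rfl
            rw [this]
            exact com_mem k r _ _
        | inr n' =>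
            have : Commute (Coprod.inr n : Monoid.Coprod (Multiplicative (ZMod k))
                (Multiplicative (ZMod r))) (Coprod.inr n') := by
              rw [Commute, SemiconjBy, ← map_mul, ← map_mul, mul_comm]
            exact this.map q
        | mul x y ihx ihy => exact (Commute.mul_right ihx ihy)
    | mul x y ihx ihy => exact Commute.mul_left (ihx h) (ihy h)
  have h1 : q ⁅g, h⁆ = 1 := by
    rw [map_commutatorElement, commutatorElement_eq_one_iff_commute]
    exact key g h
  exact (QuotientGroup.eq_one_iff _).1 h1

lemma range_eq :
    (phi k r).range
      = commutator (Monoid.Coprod (Multiplicative (ZMod k)) (Multiplicative (ZMod r))) := by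
  have hr : (phi k r).range = H k r := FreeGroup.range_lift_eq_closure
  rw [hr]
  apply le_antisymm
  · rw [H, Subgroup.closure_le]
    rintro y ⟨⟨⟨i, hi⟩, ⟨j, hj⟩⟩, rfl⟩
    rw [commutator_def]
    have : f k r (⟨i, hi⟩, ⟨j, hj⟩)
        = ⁅a k r i, b k r j⁆ := by
      show com k r i j = _
      rw [com]
      rfl
    rw [this]
    exact Subgroup.commutator_mem_commutator (Subgroup.mem_top _) (Subgroup.mem_top _)
  · rw [commutator_def]
    rw [Subgroup.commutator_le]
    intro g _ h _
    exact commutator_mem k r g h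

end Stmt6Aux

/-- For `k ≥ 2`, `r ≥ 3` with `gcd(r, k) = 1`, the free product `ℤ/k ∗ ℤ/r`
contains a non-abelian free subgroup; in fact its commutator subgroup is free
of rank `(k−1)(r−1)`. -/
theorem stmt_6 (k r : ℕ) (hk : 2 ≤ k) (hr : 3 ≤ r) (hgcd : Nat.gcd r k = 1) :
    (∃ f : FreeGroup (Fin 2) →*
        Monoid.Coprod (Multiplicative (ZMod k)) (Multiplicative (ZMod r)),
      Function.Injective f) ∧
    Nonempty
      ((commutator (Monoid.Coprod (Multiplicative (ZMod k)) (Multiplicative (ZMod r)))) ≃*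
        FreeGroup (Fin ((k - 1) * (r - 1)))) := by
  haveI : NeZero k := ⟨by omega⟩
  haveI : NeZero r := ⟨by omega⟩
  haveI : Fact (1 < k) := ⟨by omega⟩
  haveI : Fact (1 < r) := ⟨by omega⟩
  have h1k : (1 : ZMod k) ≠ 0 := one_ne_zero
  have h1r : (1 : ZMod r) ≠ 0 := one_ne_zero
  have h2r : (2 : ZMod r) ≠ 0 := by
    intro h
    have : ((2 : ℕ) : ZMod r) = 0 := by push_cast; exact h
    rw [ZMod.natCast_eq_zero_iff] at this
    have h2 := Nat.le_of_dvd (by norm_num) this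
    omega
  have h21 : (2 : ZMod r) ≠ 1 := by
    intro h
    exact h1r (by linear_combination h)
  set s1 : Stmt6Aux.S k r := (⟨1, h1k⟩, ⟨1, h1r⟩) with hs1
  set s2 : Stmt6Aux.S k r := (⟨1, h1k⟩, ⟨2, h2r⟩) with hs2
  have hne : s2 ≠ s1 := by
    intro h
    apply h21
    have := congrArg (fun s : Stmt6Aux.S k r => (s.2 : ZMod r)) h
    simpa [hs1, hs2] using this
  constructor
  · refine ⟨(Stmt6Aux.phi k r).comp
      (FreeGroup.map (fun t : Fin 2 => if t = 0 then s1 else s2)), ?_⟩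
    have hmapinj : Function.Injective
        (FreeGroup.map (fun t : Fin 2 => if t = 0 then s1 else s2) :
          FreeGroup (Fin 2) → FreeGroup (Stmt6Aux.S k r)) := by
      have retr : ∀ x : FreeGroup (Fin 2),
          FreeGroup.map (fun s : Stmt6Aux.S k r => if s = s1 then (0 : Fin 2) else 1)
            (FreeGroup.map (fun t : Fin 2 => if t = 0 then s1 else s2) x) = x := by
        intro x
        rw [FreeGroup.map.comp]
        have hcomp : ((fun s : Stmt6Aux.S k r => if s = s1 then (0 : Fin 2) else 1) ∘
            (fun t : Fin 2 => if t = 0 then s1 else s2)) = id := by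
          funext t
          fin_cases t <;> simp [hne]
        rw [hcomp, FreeGroup.map.id]
      exact Function.LeftInverse.injective retr
    exact (Stmt6Aux.phi_injective k r).comp hmapinj
  · have card1 : Fintype.card {i : ZMod k // i ≠ 0} = k - 1 := by
      have : Fintype.card {i : ZMod k // ¬ i = 0} =
          Fintype.card (ZMod k) - Fintype.card {i : ZMod k // i = 0} :=
        Fintype.card_subtype_compl _
      rw [this, ZMod.card, Fintype.card_subtype_eq]
    have card2 : Fintype.card {j : ZMod r // j ≠ 0} = r - 1 := by
      have : Fintype.card {j : ZMod r // ¬ j = 0} =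
          Fintype.card (ZMod r) - Fintype.card {j : ZMod r // j = 0} :=
        Fintype.card_subtype_compl _
      rw [this, ZMod.card, Fintype.card_subtype_eq]
    have cardS : Fintype.card (Stmt6Aux.S k r) = (k - 1) * (r - 1) := by
      rw [Fintype.card_prod, card1, card2]
    exact ⟨((MulEquiv.subgroupCongr (Stmt6Aux.range_eq k r)).symm.trans
      (MonoidHom.ofInjective (Stmt6Aux.phi_injective k r)).symm).trans
      (FreeGroup.freeGroupCongr (Fintype.equivFinOfCardEq cardS))⟩
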